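/- arXiv:2506.04675 — 3 statements merged into one kernel-verified Lean document; each statement's English description precedes it below -/
import Mathlib

section
/- Let Q be a finite index set, c : Q → ℝ with c q ≥ 0 for all q, and d : Q → ℝ^P. If the set of vectors {d q : q ∈ Q, c q > 0} spans ℝ^P, then the function ℓ(β) = ∑_{q ∈ Q} c q * log(expit(⟪d q, β⟫)) is strictly concave on ℝ^P; in particular ℓ has at most one maximizer, so the maximum composite partial likelihood estimator is unique whenever it exists. -/
open RealInnerProductSpace

noncomputable def expit (x : ℝ) : ℝ := Real.exp x / (1 + Real.exp x)

lemma log_expit_eq (x : ℝ) : Real.log (expit x) = x - Real.log (1 + Real.exp x) := by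
  unfold expit
  rw [Real.log_div (Real.exp_ne_zero x) (by positivity), Real.log_exp]

lemma strictConcave_logexpit :
    StrictConcaveOn ℝ Set.univ (fun x : ℝ => x - Real.log (1 + Real.exp x)) := by
  have hne : ∀ x : ℝ, (1 : ℝ) + Real.exp x ≠ 0 := fun x => by positivity
  have hd1 : ∀ x : ℝ, HasDerivAt (fun y => y - Real.log (1 + Real.exp y))
      (1 - Real.exp x / (1 + Real.exp x)) x := fun x =>
    (hasDerivAt_id x).sub (((Real.hasDerivAt_exp x).const_add 1).log (hne x))
  have hderiv : (deriv fun y : ℝ => y - Real.log (1 + Real.exp y)) =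
      fun x => 1 - Real.exp x / (1 + Real.exp x) := funext fun x => (hd1 x).deriv
  have hd2 : ∀ x : ℝ, HasDerivAt (fun y => 1 - Real.exp y / (1 + Real.exp y))
      (-(Real.exp x / (1 + Real.exp x) ^ 2)) x := by
    intro x
    have h := (Real.hasDerivAt_exp x).div ((Real.hasDerivAt_exp x).const_add 1) (hne x)
    have heq : (Real.exp x * (1 + Real.exp x) - Real.exp x * Real.exp x) / (1 + Real.exp x) ^ 2
        = Real.exp x / (1 + Real.exp x) ^ 2 := by ring
    rw [heq] at h
    simpa using h.const_sub 1
  apply strictConcaveOn_of_deriv2_neg convex_univ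
  · exact (continuous_id.sub ((continuous_const.add Real.continuous_exp).log
      fun x => hne x)).continuousOn
  · intro x hx
    have : deriv^[2] (fun y : ℝ => y - Real.log (1 + Real.exp y)) x
        = deriv (deriv fun y : ℝ => y - Real.log (1 + Real.exp y)) x := rfl
    rw [this, hderiv, (hd2 x).deriv]
    have : 0 < Real.exp x / (1 + Real.exp x) ^ 2 := by positivity
    linarith
theorem composite_partial_loglik_strictly_concave
    {P : ℕ} {Q : Type*} [Fintype Q]
    (c : Q → ℝ) (hc : ∀ q, 0 ≤ c q) (d : Q → EuclideanSpace ℝ (Fin P))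
    (hspan : Submodule.span ℝ {v | ∃ q : Q, 0 < c q ∧ d q = v} = ⊤) :
    StrictConcaveOn ℝ Set.univ (fun β : EuclideanSpace ℝ (Fin P) =>
        ∑ q : Q, c q * Real.log (expit ⟪d q, β⟫)) ∧
    ∀ β₁ β₂ : EuclideanSpace ℝ (Fin P),
      (∀ β, ∑ q : Q, c q * Real.log (expit ⟪d q, β⟫)
              ≤ ∑ q : Q, c q * Real.log (expit ⟪d q, β₁⟫)) →
      (∀ β, ∑ q : Q, c q * Real.log (expit ⟪d q, β⟫)
              ≤ ∑ q : Q, c q * Real.log (expit ⟪d q, β₂⟫)) →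
      β₁ = β₂ := by
  set f : ℝ → ℝ := fun x => x - Real.log (1 + Real.exp x) with hf
  have hL : ∀ β : EuclideanSpace ℝ (Fin P),
      (∑ q : Q, c q * Real.log (expit ⟪d q, β⟫)) = ∑ q : Q, c q * f ⟪d q, β⟫ := by
    intro β; exact Finset.sum_congr rfl fun q _ => by rw [log_expit_eq]
  have hSC : StrictConcaveOn ℝ Set.univ (fun β : EuclideanSpace ℝ (Fin P) =>
      ∑ q : Q, c q * Real.log (expit ⟪d q, β⟫)) := by
    refine ⟨convex_univ, ?_⟩
    intro x _ y _ hxy a b ha hb hab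
    -- find q₀ with c q₀ > 0 and differing inner products
    have hq0 : ∃ q, 0 < c q ∧ ⟪d q, x⟫ ≠ ⟪d q, y⟫ := by
      by_contra h
      push_neg at h
      have hgen : ∀ w ∈ Submodule.span ℝ {v | ∃ q : Q, 0 < c q ∧ d q = v},
          ⟪w, x - y⟫ = 0 := by
        intro w hw
        induction hw using Submodule.span_induction with
        | mem w hw =>
            obtain ⟨q, hq, rfl⟩ := hw
            rw [inner_sub_right, h q hq, sub_self]
        | zero => exact inner_zero_left _
        | add u v _ _ hu hv => rw [inner_add_left, hu, hv, add_zero]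
        | smul r u _ hu => rw [real_inner_smul_left, hu, mul_zero]
      have : ⟪x - y, x - y⟫ = 0 := hgen _ (hspan ▸ Submodule.mem_top)
      have : x - y = 0 := by rwa [inner_self_eq_zero] at this
      exact hxy (sub_eq_zero.mp this)
    obtain ⟨q₀, hcq₀, hneq₀⟩ := hq0
    simp only [hL]
    have hinner : ∀ q : Q, ⟪d q, a • x + b • y⟫ = a * ⟪d q, x⟫ + b * ⟪d q, y⟫ := by
      intro q; rw [inner_add_right, real_inner_smul_right, real_inner_smul_right]
    have hle : ∀ q : Q, a * (c q * f ⟪d q, x⟫) + b * (c q * f ⟪d q, y⟫)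
        ≤ c q * f ⟪d q, a • x + b • y⟫ := by
      intro q
      rw [hinner q]
      have := strictConcave_logexpit.concaveOn.2 (Set.mem_univ ⟪d q, x⟫)
        (Set.mem_univ ⟪d q, y⟫) ha.le hb.le hab
      simp only [smul_eq_mul] at this
      simp only [hf]
      nlinarith [hc q]
    have hlt : a * (c q₀ * f ⟪d q₀, x⟫) + b * (c q₀ * f ⟪d q₀, y⟫)
        < c q₀ * f ⟪d q₀, a • x + b • y⟫ := by
      rw [hinner q₀]
      have := strictConcave_logexpit.2 (Set.mem_univ ⟪d q₀, x⟫)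
        (Set.mem_univ ⟪d q₀, y⟫) hneq₀ ha hb hab
      simp only [smul_eq_mul] at this
      simp only [hf]
      nlinarith
    calc a • (∑ q : Q, c q * f ⟪d q, x⟫) + b • (∑ q : Q, c q * f ⟪d q, y⟫)
        = ∑ q : Q, (a * (c q * f ⟪d q, x⟫) + b * (c q * f ⟪d q, y⟫)) := by
          rw [smul_eq_mul, smul_eq_mul, Finset.mul_sum, Finset.mul_sum,
            ← Finset.sum_add_distrib]
      _ < ∑ q : Q, c q * f ⟪d q, a • x + b • y⟫ :=
          Finset.sum_lt_sum (fun q _ => hle q) ⟨q₀, Finset.mem_univ q₀, hlt⟩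
  refine ⟨hSC, ?_⟩
  intro β₁ β₂ h₁ h₂
  by_contra hne
  have heq : (∑ q : Q, c q * Real.log (expit ⟪d q, β₁⟫))
      = ∑ q : Q, c q * Real.log (expit ⟪d q, β₂⟫) := le_antisymm (h₂ β₁) (h₁ β₂)
  have h := hSC.2 (Set.mem_univ β₁) (Set.mem_univ β₂) hne
    (by norm_num : (0:ℝ) < 1/2) (by norm_num : (0:ℝ) < 1/2) (by norm_num)
  have h' := h₁ ((1/2 : ℝ) • β₁ + (1/2 : ℝ) • β₂)
  beta_reduce at h
  rw [smul_eq_mul, smul_eq_mul, heq] at h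
  linarith
end

section
/- Let I be a nonempty finite index set, f : I → ℝ, and i ∈ I. Then ∏_{j ∈ I, j ≠ i} expit(f i - f j) ≤ exp(f i) / ∑_{j ∈ I} exp(f j). (The one-vs-each bound: each pairwise-product factor of the composite partial likelihood is a lower bound for the corresponding softmax factor of Cox's partial likelihood.) -/
lemma aux_one_add_sum_le_prod {I : Type*} [DecidableEq I] (s : Finset I) (a : I → ℝ)
    (ha : ∀ j ∈ s, 0 ≤ a j) : 1 + ∑ j ∈ s, a j ≤ ∏ j ∈ s, (1 + a j) := by
  classical
  induction s using Finset.cons_induction with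
  | empty => simp
  | cons x s hx ih =>
    rw [Finset.cons_eq_insert]
    rw [Finset.sum_insert hx, Finset.prod_insert hx]
    have h1 : 1 + ∑ j ∈ s, a j ≤ ∏ j ∈ s, (1 + a j) :=
      ih fun j hj => ha j (Finset.mem_cons_of_mem hj)
    have hax : 0 ≤ a x := ha x (Finset.mem_cons_self x s)
    have hs : 0 ≤ ∑ j ∈ s, a j := Finset.sum_nonneg fun j hj => ha j (Finset.mem_cons_of_mem hj)
    nlinarith

theorem one_vs_each_bound
    {I : Type*} [Fintype I] [DecidableEq I] [Nonempty I]
    (f : I → ℝ) (i : I) :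
    ∏ j ∈ Finset.univ.erase i, expit (f i - f j)
      ≤ Real.exp (f i) / ∑ j : I, Real.exp (f j) := by
  set s := Finset.univ.erase i
  have hexp : ∀ x : ℝ, 0 < Real.exp x := Real.exp_pos
  have h1 : ∀ j, expit (f i - f j) = 1 / (1 + Real.exp (f j - f i)) := by
    intro j
    unfold expit
    rw [Real.exp_sub, Real.exp_sub]
    field_simp
    ring
  have hsum : ∑ j : I, Real.exp (f j) = Real.exp (f i) + ∑ j ∈ s, Real.exp (f j) := by
    exact (Finset.add_sum_erase _ _ (Finset.mem_univ i)).symm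
  have key : 1 + ∑ j ∈ s, Real.exp (f j - f i) ≤ ∏ j ∈ s, (1 + Real.exp (f j - f i)) :=
    aux_one_add_sum_le_prod s _ fun j _ => (hexp _).le
  have hprodpos : 0 < ∏ j ∈ s, (1 + Real.exp (f j - f i)) :=
    Finset.prod_pos fun j _ => by positivity
  have hspos : 0 < 1 + ∑ j ∈ s, Real.exp (f j - f i) := by
    positivity
  calc ∏ j ∈ s, expit (f i - f j)
      = ∏ j ∈ s, 1 / (1 + Real.exp (f j - f i)) := by
        exact Finset.prod_congr rfl fun j _ => h1 j
    _ = 1 / ∏ j ∈ s, (1 + Real.exp (f j - f i)) := by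
        simp [one_div, ← Finset.prod_inv_distrib]
    _ ≤ 1 / (1 + ∑ j ∈ s, Real.exp (f j - f i)) := by
        apply one_div_le_one_div_of_le hspos key
    _ = Real.exp (f i) / ∑ j : I, Real.exp (f j) := by
        rw [hsum]
        have : Real.exp (f i) + ∑ j ∈ s, Real.exp (f j)
            = Real.exp (f i) * (1 + ∑ j ∈ s, Real.exp (f j - f i)) := by
          rw [mul_add, mul_one, Finset.mul_sum]
          congr 1
          exact Finset.sum_congr rfl fun j _ => by rw [← Real.exp_add]; ring_nf
        rw [this]
        rw [eq_div_iff (by positivity)]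
        field_simp
end

section
/- Let n ∈ ℕ, and for i = 1,…,n let δ_i ∈ {0,1}, let X_i ∈ ℝ^P, and let R_i ⊆ {1,…,n} be a finite set containing i (the risk set at time T_i). Then for every β ∈ ℝ^P, ∏_{i=1}^n (∏_{j ∈ R_i, j ≠ i} expit(⟪X_i - X_j, β⟫))^{δ_i} ≤ ∏_{i=1}^n (exp(⟪X_i, β⟫) / ∑_{j ∈ R_i} exp(⟪X_j, β⟫))^{δ_i}. (The composite partial likelihood is a lower bound of Cox's partial likelihood.) -/
open RealInnerProductSpace

lemma one_add_sum_le_prod {α : Type*} [DecidableEq α] (s : Finset α) (f : α → ℝ)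
    (hf : ∀ a ∈ s, 0 ≤ f a) : 1 + ∑ a ∈ s, f a ≤ ∏ a ∈ s, (1 + f a) := by
  induction s using Finset.induction_on with
  | empty => simp
  | @insert a s ha ih =>
    rw [Finset.sum_insert ha, Finset.prod_insert ha]
    have h1 : 0 ≤ f a := hf a (Finset.mem_insert_self a s)
    have h2 : ∀ b ∈ s, 0 ≤ f b := fun b hb => hf b (Finset.mem_insert_of_mem hb)
    have h3 := ih h2
    have hs : 0 ≤ ∑ b ∈ s, f b := Finset.sum_nonneg h2
    nlinarith [Finset.sum_nonneg h2]

theorem composite_le_partial_likelihood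
    {P : ℕ} (n : ℕ) (δ : Fin n → ℕ) (hδ : ∀ i, δ i = 0 ∨ δ i = 1)
    (X : Fin n → EuclideanSpace ℝ (Fin P))
    (R : Fin n → Finset (Fin n)) (hR : ∀ i, i ∈ R i)
    (β : EuclideanSpace ℝ (Fin P)) :
    ∏ i : Fin n, (∏ j ∈ (R i).erase i, expit ⟪X i - X j, β⟫) ^ δ i
      ≤ ∏ i : Fin n,
          (Real.exp ⟪X i, β⟫ / ∑ j ∈ R i, Real.exp ⟪X j, β⟫) ^ δ i := by
  apply Finset.prod_le_prod
  · intro i _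
    apply pow_nonneg
    apply Finset.prod_nonneg
    intro j _
    unfold expit
    positivity
  · intro i _
    have key : ∏ j ∈ (R i).erase i, expit ⟪X i - X j, β⟫
        ≤ Real.exp ⟪X i, β⟫ / ∑ j ∈ R i, Real.exp ⟪X j, β⟫ := by
      set a := fun j => ⟪X j, β⟫ with ha
      have hexp : ∀ j ∈ (R i).erase i, expit ⟪X i - X j, β⟫
          = 1 / (1 + Real.exp (a j - a i)) := by
        intro j _
        have : ⟪X i - X j, β⟫ = a i - a j := by
          simp [ha, inner_sub_left]
        rw [this]
        unfold expit
        rw [div_eq_div_iff (by positivity) (by positivity)]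
        rw [one_mul, mul_add, mul_one, ← Real.exp_add]
        ring_nf
        rw [Real.exp_zero]
        ring
      rw [Finset.prod_congr rfl hexp]
      have hsum : ∑ j ∈ R i, Real.exp (a j)
          = Real.exp (a i) * (1 + ∑ j ∈ (R i).erase i, Real.exp (a j - a i)) := by
        rw [mul_add, mul_one, Finset.mul_sum]
        rw [← Finset.add_sum_erase _ _ (hR i)]
        congr 1
        apply Finset.sum_congr rfl
        intro j _
        rw [← Real.exp_add]
        ring_nf
      rw [hsum]
      rw [Finset.prod_div_distrib, Finset.prod_const_one]
      have hprod : 0 < ∏ j ∈ (R i).erase i, (1 + Real.exp (a j - a i)) :=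
        Finset.prod_pos (fun j _ => by positivity)
      rw [div_le_div_iff₀ hprod (by positivity)]
      have hle := one_add_sum_le_prod ((R i).erase i) (fun j => Real.exp (a j - a i))
        (fun j _ => (Real.exp_pos _).le)
      calc 1 * (Real.exp (a i) * (1 + ∑ j ∈ (R i).erase i, Real.exp (a j - a i)))
          ≤ 1 * (Real.exp (a i) * ∏ j ∈ (R i).erase i, (1 + Real.exp (a j - a i))) := by
            apply mul_le_mul_of_nonneg_left _ one_pos.le
            exact mul_le_mul_of_nonneg_left hle (Real.exp_pos _).le
        _ = Real.exp ⟪X i, β⟫ * ∏ j ∈ (R i).erase i, (1 + Real.exp (a j - a i)) := by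
            rw [ha]; ring
    rcases hδ i with h | h
    · rw [h, pow_zero, pow_zero]
    · rw [h, pow_one, pow_one]; exact key
end
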